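/- Assume the Halpern setting: Q* : S × A → ℝ and g* ∈ ℝ satisfy 𝒯 Q* = Q* + g* • 1, ε ≥ 0, n ≥ 1, sequences Q, T : ℕ → (S × A → ℝ) satisfy Q k = (2/(k+2)) • Q 0 + (k/(k+2)) • T (k−1) for all 1 ≤ k ≤ n and ‖T k − 𝒯 (Q k)‖∞ ≤ ε for all 0 ≤ k ≤ n, and Sp(T k − T (k−1)) ≤ Sp(Q k − Q (k−1)) for all 1 ≤ k ≤ n. Then Sp(𝒯 (Q n) − Q n) ≤ 8 * Sp(Q 0 − Q*) / (n+2) + 4 * ε. -/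

import Mathlib

open Finset

noncomputable def supNorm {X : Type*} [Fintype X] [Nonempty X] (v : X → ℝ) : ℝ :=
  Finset.univ.sup' Finset.univ_nonempty fun x => |v x|

noncomputable def spanSN {X : Type*} [Fintype X] [Nonempty X] (v : X → ℝ) : ℝ :=
  (Finset.univ.sup' Finset.univ_nonempty v) - (Finset.univ.inf' Finset.univ_nonempty v)

noncomputable def sigma' {S A : Type*} [Fintype S] (P : S → A → Set (S → ℝ))
    (h : S → ℝ) (s : S) (a : A) : ℝ :=
  sInf {x : ℝ | ∃ p ∈ P s a, x = ∑ s', p s' * h s'}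

noncomputable def bellman {S A : Type*} [Fintype S] [Fintype A] [Nonempty A]
    (P : S → A → Set (S → ℝ)) (r : S → A → ℝ) (Q : S × A → ℝ) : S × A → ℝ :=
  fun sa => r sa.1 sa.2 +
    sigma' P (fun s' => Finset.univ.sup' Finset.univ_nonempty fun a' => Q (s', a')) sa.1 sa.2

section helpers
variable {X : Type*} [Fintype X] [Nonempty X]

lemma le_sup'' (v : X → ℝ) (x : X) : v x ≤ Finset.univ.sup' Finset.univ_nonempty v :=
  Finset.le_sup' v (Finset.mem_univ x)

lemma inf''_le (v : X → ℝ) (x : X) : Finset.univ.inf' Finset.univ_nonempty v ≤ v x :=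
  Finset.inf'_le v (Finset.mem_univ x)

lemma spanSN_le_of_bounds {v : X → ℝ} {m M : ℝ} (h1 : ∀ x, v x ≤ M) (h2 : ∀ x, m ≤ v x) :
    spanSN v ≤ M - m := by
  have hs : Finset.univ.sup' Finset.univ_nonempty v ≤ M :=
    Finset.sup'_le _ _ fun x _ => h1 x
  have hi : m ≤ Finset.univ.inf' Finset.univ_nonempty v :=
    Finset.le_inf' _ _ fun x _ => h2 x
  unfold spanSN; linarith

lemma spanSN_nonneg (v : X → ℝ) : 0 ≤ spanSN v := by
  obtain ⟨x⟩ := (inferInstance : Nonempty X)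
  have h1 := le_sup'' v x
  have h2 := inf''_le v x
  unfold spanSN; linarith

lemma spanSN_add_le (u v : X → ℝ) : spanSN (u + v) ≤ spanSN u + spanSN v := by
  have h := spanSN_le_of_bounds (v := u + v)
    (M := Finset.univ.sup' Finset.univ_nonempty u + Finset.univ.sup' Finset.univ_nonempty v)
    (m := Finset.univ.inf' Finset.univ_nonempty u + Finset.univ.inf' Finset.univ_nonempty v)
    (fun x => add_le_add (le_sup'' u x) (le_sup'' v x))
    (fun x => add_le_add (inf''_le u x) (inf''_le v x))
  unfold spanSN at *; linarith

lemma spanSN_neg_le (v : X → ℝ) : spanSN (-v) ≤ spanSN v := by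
  have h := spanSN_le_of_bounds (v := -v)
    (M := -(Finset.univ.inf' Finset.univ_nonempty v))
    (m := -(Finset.univ.sup' Finset.univ_nonempty v))
    (fun x => neg_le_neg (inf''_le v x))
    (fun x => neg_le_neg (le_sup'' v x))
  unfold spanSN at *; linarith

lemma spanSN_smul_le (c : ℝ) (hc : 0 ≤ c) (v : X → ℝ) : spanSN (c • v) ≤ c * spanSN v := by
  have h := spanSN_le_of_bounds (v := c • v)
    (M := c * Finset.univ.sup' Finset.univ_nonempty v)
    (m := c * Finset.univ.inf' Finset.univ_nonempty v)
    (fun x => mul_le_mul_of_nonneg_left (le_sup'' v x) hc)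
    (fun x => mul_le_mul_of_nonneg_left (inf''_le v x) hc)
  unfold spanSN at *; nlinarith

lemma spanSN_const_le (g : ℝ) : spanSN (g • (1 : X → ℝ)) ≤ 0 := by
  have h := spanSN_le_of_bounds (v := g • (1 : X → ℝ)) (M := g) (m := g)
    (fun x => by simp) (fun x => by simp)
  linarith

lemma spanSN_le_two_supNorm (v : X → ℝ) : spanSN v ≤ 2 * supNorm v := by
  have h := spanSN_le_of_bounds (v := v) (M := supNorm v) (m := -supNorm v)
    (fun x => le_trans (le_abs_self _) (le_sup'' (fun x => |v x|) x))
    (fun x => by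
      have h1 : -|v x| ≤ v x := neg_abs_le (v x)
      have h2 : |v x| ≤ supNorm v := le_sup'' (fun x => |v x|) x
      linarith)
  linarith

lemma spanSN_sub_triangle (a b c : X → ℝ) :
    spanSN (a - c) ≤ spanSN (a - b) + spanSN (b - c) := by
  have h : a - c = (a - b) + (b - c) := by funext x; simp
  rw [h]; exact spanSN_add_le _ _
end helpers

section op
variable {S A : Type*} [Fintype S] [Fintype A] [Nonempty S] [Nonempty A]
variable (P : S → A → Set (S → ℝ))

set_option linter.unusedSectionVars false

lemma sigma'_set_nonempty (hne : ∀ s a, (P s a).Nonempty) (h : S → ℝ) (s : S) (a : A) :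
    {x : ℝ | ∃ p ∈ P s a, x = ∑ s', p s' * h s'}.Nonempty := by
  obtain ⟨p, hp⟩ := hne s a
  exact ⟨_, p, hp, rfl⟩

lemma sigma'_set_bddBelow (hsub : ∀ s a, P s a ⊆ stdSimplex ℝ S) (h : S → ℝ) (s : S) (a : A) :
    BddBelow {x : ℝ | ∃ p ∈ P s a, x = ∑ s', p s' * h s'} := by
  refine ⟨Finset.univ.inf' Finset.univ_nonempty h, ?_⟩
  rintro x ⟨p, hp, rfl⟩
  obtain ⟨hp1, hp2⟩ := hsub s a hp
  calc Finset.univ.inf' Finset.univ_nonempty h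
      = ∑ s', p s' * Finset.univ.inf' Finset.univ_nonempty h := by
        rw [← Finset.sum_mul, hp2, one_mul]
    _ ≤ ∑ s', p s' * h s' :=
        Finset.sum_le_sum fun s' _ => mul_le_mul_of_nonneg_left (inf''_le h s') (hp1 s')

lemma sigma'_sub_le (hne : ∀ s a, (P s a).Nonempty) (hsub : ∀ s a, P s a ⊆ stdSimplex ℝ S)
    (h h' : S → ℝ) (M : ℝ) (hM : ∀ s', h s' - h' s' ≤ M) (s : S) (a : A) :
    sigma' P h s a ≤ sigma' P h' s a + M := by
  rw [sigma', sigma', ← sub_le_iff_le_add]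
  refine le_csInf (sigma'_set_nonempty P hne h' s a) ?_
  rintro x ⟨p, hp, rfl⟩
  obtain ⟨hp1, hp2⟩ := hsub s a hp
  rw [sub_le_iff_le_add]
  have h1 : sInf {x : ℝ | ∃ p ∈ P s a, x = ∑ s', p s' * h s'} ≤ ∑ s', p s' * h s' :=
    csInf_le (sigma'_set_bddBelow P hsub h s a) ⟨p, hp, rfl⟩
  have h2 : ∑ s', p s' * h s' ≤ (∑ s', p s' * h' s') + M := by
    calc ∑ s', p s' * h s' ≤ ∑ s', (p s' * h' s' + p s' * M) := by
          refine Finset.sum_le_sum fun s' _ => ?_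
          have := mul_le_mul_of_nonneg_left (hM s') (hp1 s')
          nlinarith
      _ = (∑ s', p s' * h' s') + M := by
          rw [Finset.sum_add_distrib, ← Finset.sum_mul, hp2, one_mul]
  linarith

lemma bellman_span_le (hne : ∀ s a, (P s a).Nonempty) (hsub : ∀ s a, P s a ⊆ stdSimplex ℝ S)
    (r : S → A → ℝ) (X Y : S × A → ℝ) :
    spanSN (bellman P r X - bellman P r Y) ≤ spanSN (X - Y) := by
  set M := Finset.univ.sup' Finset.univ_nonempty (X - Y) with hMdef
  set m := Finset.univ.inf' Finset.univ_nonempty (X - Y) with hmdef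
  set hX : S → ℝ := fun s' => Finset.univ.sup' Finset.univ_nonempty fun a' => X (s', a')
  set hY : S → ℝ := fun s' => Finset.univ.sup' Finset.univ_nonempty fun a' => Y (s', a')
  have hMb : ∀ s', hX s' - hY s' ≤ M := by
    intro s'
    rw [sub_le_iff_le_add]
    refine Finset.sup'_le _ _ fun a' _ => ?_
    have h1 : X (s', a') - Y (s', a') ≤ M := le_sup'' (X - Y) (s', a')
    have h2 : Y (s', a') ≤ hY s' := le_sup'' (fun a' => Y (s', a')) a'
    linarith
  have hmb : ∀ s', hY s' - hX s' ≤ -m := by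
    intro s'
    rw [sub_le_iff_le_add]
    refine Finset.sup'_le _ _ fun a' _ => ?_
    have h1 : m ≤ X (s', a') - Y (s', a') := inf''_le (X - Y) (s', a')
    have h2 : X (s', a') ≤ hX s' := le_sup'' (fun a' => X (s', a')) a'
    linarith
  have key : spanSN (bellman P r X - bellman P r Y) ≤ M - m := by
    refine spanSN_le_of_bounds (fun sa => ?_) (fun sa => ?_)
    · have := sigma'_sub_le P hne hsub hX hY M hMb sa.1 sa.2
      show bellman P r X sa - bellman P r Y sa ≤ M
      simp only [bellman]
      linarith
    · have := sigma'_sub_le P hne hsub hY hX (-m) hmb sa.1 sa.2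
      show m ≤ bellman P r X sa - bellman P r Y sa
      simp only [bellman]
      linarith
  exact key
end op

set_option maxHeartbeats 1000000 in
/-- Deterministic core of the paper's Theorem 5 (Theorem A1): residual span bound
for Robust Halpern Iteration with inexact operator evaluations. -/
theorem stmt18 {S A : Type*} [Fintype S] [Fintype A] [Nonempty S] [Nonempty A]
    (P : S → A → Set (S → ℝ))
    (hne : ∀ s a, (P s a).Nonempty)
    (hsub : ∀ s a, P s a ⊆ stdSimplex ℝ S)
    (r : S → A → ℝ)
    (Qstar : S × A → ℝ) (gstar : ℝ)
    (hstar : bellman P r Qstar = Qstar + gstar • (1 : S × A → ℝ))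
    (ε : ℝ) (hε : 0 ≤ ε) (n : ℕ) (hn : 1 ≤ n)
    (Q T : ℕ → (S × A → ℝ))
    (hrec : ∀ k, 1 ≤ k → k ≤ n →
      Q k = (2 / ((k : ℝ) + 2)) • Q 0 + ((k : ℝ) / ((k : ℝ) + 2)) • T (k - 1))
    (happrox : ∀ k ≤ n, supNorm (T k - bellman P r (Q k)) ≤ ε)
    (hTQ : ∀ k, 1 ≤ k → k ≤ n → spanSN (T k - T (k - 1)) ≤ spanSN (Q k - Q (k - 1))) :
    spanSN (bellman P r (Q n) - Q n) ≤
      8 * spanSN (Q 0 - Qstar) / ((n : ℝ) + 2) + 4 * ε := by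
  set B := spanSN (Q 0 - Qstar) with hBdef
  have hB0 : 0 ≤ B := spanSN_nonneg _
  -- span nonexpansiveness towards the fixed point
  have hcontr : ∀ X : S × A → ℝ,
      spanSN (bellman P r X - Qstar) ≤ spanSN (X - Qstar) := by
    intro X
    have hid : bellman P r X - Qstar =
        (bellman P r X - bellman P r Qstar) + gstar • (1 : S × A → ℝ) := by
      rw [hstar]; funext sa
      simp only [Pi.sub_apply, Pi.add_apply, Pi.smul_apply, Pi.one_apply, smul_eq_mul]
      ring
    rw [hid]
    have h1 := spanSN_add_le (bellman P r X - bellman P r Qstar) (gstar • (1 : S × A → ℝ))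
    have h2 := spanSN_const_le (X := S × A) gstar
    have h3 := bellman_span_le P hne hsub r X Qstar
    linarith
  -- approximation in span seminorm
  have happ2 : ∀ k ≤ n, spanSN (T k - bellman P r (Q k)) ≤ 2 * ε := by
    intro k hk
    have h1 := spanSN_le_two_supNorm (T k - bellman P r (Q k))
    have h2 := happrox k hk
    linarith
  -- distance from T k to Qstar
  have hTstar : ∀ k ≤ n, spanSN (T k - Qstar) ≤ 2 * ε + spanSN (Q k - Qstar) := by
    intro k hk
    have h1 := spanSN_sub_triangle (T k) (bellman P r (Q k)) Qstar
    have h2 := happ2 k hk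
    have h3 := hcontr (Q k)
    linarith
  -- distance of iterates from Qstar
  have hQs : ∀ k, k ≤ n → spanSN (Q k - Qstar) ≤ B + (2 * (k : ℝ) / 3) * ε := by
    intro k
    induction k with
    | zero => intro _; simp [hBdef]
    | succ k ih =>
      intro hkn
      have hk' : k ≤ n := le_trans (Nat.le_succ k) hkn
      have hrec' := hrec (k + 1) (Nat.succ_le_succ (Nat.zero_le k)) hkn
      simp only [Nat.add_sub_cancel] at hrec'
      push_cast at hrec'
      have hden : ((k : ℝ) + 1 + 2) ≠ 0 := by positivity
      have hid : Q (k + 1) - Qstar =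
          (2 / ((k : ℝ) + 1 + 2)) • (Q 0 - Qstar) +
            (((k : ℝ) + 1) / ((k : ℝ) + 1 + 2)) • (T k - Qstar) := by
        rw [hrec']; funext x
        simp only [Pi.add_apply, Pi.sub_apply, Pi.smul_apply, smul_eq_mul]
        field_simp
        ring
      have h1 : spanSN (Q (k + 1) - Qstar) ≤
          (2 / ((k : ℝ) + 1 + 2)) * B +
            (((k : ℝ) + 1) / ((k : ℝ) + 1 + 2)) * spanSN (T k - Qstar) := by
        rw [hid]
        have ha := spanSN_add_le ((2 / ((k : ℝ) + 1 + 2)) • (Q 0 - Qstar))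
          ((((k : ℝ) + 1) / ((k : ℝ) + 1 + 2)) • (T k - Qstar))
        have hb1 := spanSN_smul_le (2 / ((k : ℝ) + 1 + 2)) (by positivity) (Q 0 - Qstar)
        have hb2 := spanSN_smul_le (((k : ℝ) + 1) / ((k : ℝ) + 1 + 2)) (by positivity)
          (T k - Qstar)
        rw [← hBdef] at hb1
        linarith
      have h2 := hTstar k hk'
      have h3 := ih hk'
      have h4 : spanSN (T k - Qstar) ≤ 2 * ε + B + (2 * (k : ℝ) / 3) * ε := by linarith
      have h5 : (2 / ((k : ℝ) + 1 + 2)) * B +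
          (((k : ℝ) + 1) / ((k : ℝ) + 1 + 2)) * (2 * ε + B + (2 * (k : ℝ) / 3) * ε)
          = B + (2 * ((k : ℝ) + 1) / 3) * ε := by
        field_simp
        ring
      push_cast
      have h6 : (((k : ℝ) + 1) / ((k : ℝ) + 1 + 2)) * spanSN (T k - Qstar) ≤
          (((k : ℝ) + 1) / ((k : ℝ) + 1 + 2)) * (2 * ε + B + (2 * (k : ℝ) / 3) * ε) :=
        mul_le_mul_of_nonneg_left h4 (by positivity)
      linarith
  -- distance from T k to Q 0
  have hb : ∀ k ≤ n, spanSN (T k - Q 0) ≤ 2 * B + (2 * (k : ℝ) / 3 + 2) * ε := by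
    intro k hk
    have h1 := spanSN_sub_triangle (T k) Qstar (Q 0)
    have h2 := hTstar k hk
    have h3 := hQs k hk
    have h4 : spanSN (Qstar - Q 0) ≤ B := by
      rw [← neg_sub]
      exact spanSN_neg_le _
    linarith
  -- the key recursion on consecutive differences
  have hd : ∀ k, 1 ≤ k → k ≤ n →
      (((k : ℝ) + 1) * ((k : ℝ) + 2)) * spanSN (T k - T (k - 1)) ≤
        4 * (k : ℝ) * B + (4 * (k : ℝ) + (2 / 3) * ((k : ℝ) - 1) * ((k : ℝ) - 2)) * ε := by
    intro k hk1
    induction k, hk1 using Nat.le_induction with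
    | base =>
      intro h1n
      have hTQ1 := hTQ 1 le_rfl h1n
      have hrec1 := hrec 1 le_rfl h1n
      have hid : Q 1 - Q 0 = ((1 : ℝ) / 3) • (T 0 - Q 0) := by
        rw [hrec1]; funext x
        simp only [Pi.add_apply, Pi.sub_apply, Pi.smul_apply, smul_eq_mul]
        norm_num
        ring
      have hb0 := hb 0 (le_trans (Nat.zero_le 1) h1n)
      have h1 : spanSN (Q 1 - Q 0) ≤ (1 / 3) * spanSN (T 0 - Q 0) := by
        rw [hid]
        exact spanSN_smul_le _ (by norm_num) _
      norm_num at hb0 ⊢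
      linarith
    | succ k hk1 ih =>
      intro hkn
      have hk' : k ≤ n := le_trans (Nat.le_succ k) hkn
      have ihb := ih hk'
      have hbk := hb (k - 1) (le_trans (Nat.sub_le k 1) hk')
      rw [Nat.cast_sub hk1, Nat.cast_one] at hbk
      have hrecs := hrec (k + 1) (Nat.succ_le_succ (Nat.zero_le k)) hkn
      simp only [Nat.add_sub_cancel] at hrecs
      push_cast at hrecs
      have hreck := hrec k hk1 hk'
      have hTQs := hTQ (k + 1) (Nat.succ_le_succ (Nat.zero_le k)) hkn
      simp only [Nat.add_sub_cancel] at hTQs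
      have hk1R : (1 : ℝ) ≤ (k : ℝ) := by exact_mod_cast hk1
      have hden1 : ((k : ℝ) + 2) ≠ 0 := by positivity
      have hden2 : ((k : ℝ) + 1 + 2) ≠ 0 := by positivity
      have hid : Q (k + 1) - Q k =
          (((k : ℝ) + 1) / ((k : ℝ) + 1 + 2)) • (T k - T (k - 1)) +
            (2 / (((k : ℝ) + 2) * ((k : ℝ) + 1 + 2))) • (T (k - 1) - Q 0) := by
        rw [hrecs, hreck]; funext x
        simp only [Pi.add_apply, Pi.sub_apply, Pi.smul_apply, smul_eq_mul]
        field_simp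
        ring
      have h1 : spanSN (Q (k + 1) - Q k) ≤
          (((k : ℝ) + 1) / ((k : ℝ) + 1 + 2)) * spanSN (T k - T (k - 1)) +
            (2 / (((k : ℝ) + 2) * ((k : ℝ) + 1 + 2))) * spanSN (T (k - 1) - Q 0) := by
        rw [hid]
        have ha := spanSN_add_le
          ((((k : ℝ) + 1) / ((k : ℝ) + 1 + 2)) • (T k - T (k - 1)))
          ((2 / (((k : ℝ) + 2) * ((k : ℝ) + 1 + 2))) • (T (k - 1) - Q 0))
        have hs1 := spanSN_smul_le (((k : ℝ) + 1) / ((k : ℝ) + 1 + 2)) (by positivity)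
          (T k - T (k - 1))
        have hs2 := spanSN_smul_le (2 / (((k : ℝ) + 2) * ((k : ℝ) + 1 + 2))) (by positivity)
          (T (k - 1) - Q 0)
        linarith
      -- abbreviations
      set Dk := spanSN (T k - T (k - 1)) with hDk
      set Dk1 := spanSN (T (k + 1) - T k) with hDk1
      set E := spanSN (T (k - 1) - Q 0) with hE
      have hDk0 : 0 ≤ Dk := spanSN_nonneg _
      have hE0 : 0 ≤ E := spanSN_nonneg _
      have hQk1 : spanSN (Q (k + 1) - Q k) ≤
          (((k : ℝ) + 1) / ((k : ℝ) + 1 + 2)) * Dk +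
            (2 / (((k : ℝ) + 2) * ((k : ℝ) + 1 + 2))) * E := h1
      have hmul : (((k : ℝ) + 2) * ((k : ℝ) + 1 + 2)) *
          ((((k : ℝ) + 1) / ((k : ℝ) + 1 + 2)) * Dk +
            (2 / (((k : ℝ) + 2) * ((k : ℝ) + 1 + 2))) * E)
          = ((k : ℝ) + 1) * ((k : ℝ) + 2) * Dk + 2 * E := by
        field_simp
      have hpos : (0 : ℝ) < ((k : ℝ) + 2) * ((k : ℝ) + 1 + 2) := by positivity
      have hstep : (((k : ℝ) + 2) * ((k : ℝ) + 1 + 2)) * Dk1 ≤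
          ((k : ℝ) + 1) * ((k : ℝ) + 2) * Dk + 2 * E := by
        have hchain : Dk1 ≤ (((k : ℝ) + 1) / ((k : ℝ) + 1 + 2)) * Dk +
            (2 / (((k : ℝ) + 2) * ((k : ℝ) + 1 + 2))) * E := le_trans hTQs hQk1
        have := mul_le_mul_of_nonneg_left hchain (le_of_lt hpos)
        linarith [hmul ▸ this]
      push_cast
      have heps : (4 * (k : ℝ) + (2 / 3) * ((k : ℝ) - 1) * ((k : ℝ) - 2)) * ε +
          (4 * ((k : ℝ) - 1) / 3 + 4) * ε
          = (4 * ((k : ℝ) + 1) + (2 / 3) * (((k : ℝ) + 1) - 1) * (((k : ℝ) + 1) - 2)) * ε := by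
        ring
      nlinarith [hstep, ihb, hbk, hB0, hε, hk1R]
  -- final assembly
  have hrecn := hrec n hn le_rfl
  have hdn := hd n hn le_rfl
  have hbn := hb (n - 1) (Nat.sub_le n 1)
  rw [Nat.cast_sub hn, Nat.cast_one] at hbn
  set c := (n : ℝ) with hc
  have hc1 : (1 : ℝ) ≤ c := by rw [hc]; exact_mod_cast hn
  set Dn := spanSN (T n - T (n - 1)) with hDn
  set E := spanSN (T (n - 1) - Q 0) with hEdef
  have hDn0 : 0 ≤ Dn := spanSN_nonneg _
  have hE0 : 0 ≤ E := spanSN_nonneg _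
  have hdenc : (c + 2) ≠ 0 := by positivity
  have hid : T n - Q n = (T n - T (n - 1)) + (2 / (c + 2)) • (T (n - 1) - Q 0) := by
    rw [hrecn]; funext x
    simp only [Pi.add_apply, Pi.sub_apply, Pi.smul_apply, smul_eq_mul]
    field_simp
    ring
  have h1 : spanSN (T n - Q n) ≤ Dn + (2 / (c + 2)) * E := by
    rw [hid]
    have ha := spanSN_add_le (T n - T (n - 1)) ((2 / (c + 2)) • (T (n - 1) - Q 0))
    have hs := spanSN_smul_le (2 / (c + 2)) (by positivity) (T (n - 1) - Q 0)
    linarith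
  have h2 : spanSN (bellman P r (Q n) - Q n) ≤ 2 * ε + spanSN (T n - Q n) := by
    have ht := spanSN_sub_triangle (bellman P r (Q n)) (T n) (Q n)
    have hneg : spanSN (bellman P r (Q n) - T n) ≤ 2 * ε := by
      rw [← neg_sub]
      exact le_trans (spanSN_neg_le _) (happ2 n le_rfl)
    linarith
  have hGm : spanSN (bellman P r (Q n) - Q n) ≤ 2 * ε + Dn + (2 / (c + 2)) * E := by
    linarith
  set Gm := spanSN (bellman P r (Q n) - Q n) with hGmdef
  have hGm0 : 0 ≤ Gm := spanSN_nonneg _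
  have hpos12 : (0 : ℝ) < (c + 1) * (c + 2) := by positivity
  have hfe : (c + 1) * (c + 2) * (2 * ε + Dn + (2 / (c + 2)) * E)
      = 2 * (c + 1) * (c + 2) * ε + (c + 1) * (c + 2) * Dn + 2 * (c + 1) * E := by
    field_simp
  have hGm2 : (c + 1) * (c + 2) * Gm ≤
      2 * (c + 1) * (c + 2) * ε + (c + 1) * (c + 2) * Dn + 2 * (c + 1) * E := by
    have := mul_le_mul_of_nonneg_left hGm (le_of_lt hpos12)
    linarith [hfe ▸ this]
  have hEm : 2 * (c + 1) * E ≤ 4 * (c + 1) * B + (4 / 3) * (c + 1) * (c + 2) * ε := by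
    have := mul_le_mul_of_nonneg_left hbn (show (0 : ℝ) ≤ 2 * (c + 1) by linarith)
    nlinarith [this]
  have hfinal : (c + 1) * (c + 2) * Gm ≤ 8 * (c + 1) * B + 4 * (c + 1) * (c + 2) * ε := by
    have heps : (4 * c + (2 / 3) * (c - 1) * (c - 2)) * ε = (2 / 3) * (c + 1) * (c + 2) * ε := by
      ring
    nlinarith [hGm2, hdn, hEm, hB0, hε]
  have hdiv : Gm ≤ (8 * (c + 1) * B + 4 * (c + 1) * (c + 2) * ε) / ((c + 1) * (c + 2)) := by
    rw [le_div_iff₀ hpos12]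
    nlinarith [hfinal]
  have hfinal2 : (8 * (c + 1) * B + 4 * (c + 1) * (c + 2) * ε) / ((c + 1) * (c + 2))
      = 8 * B / (c + 2) + 4 * ε := by
    field_simp
  rw [hfinal2] at hdiv
  exact hdiv
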